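/- arXiv:1009.2674 — 4 statements merged into one kernel-verified Lean document; each statement's English description precedes it below -/
import Mathlib

section
/- Let $k: (0,\infty) \to \mathbb{R}$ be $C^2$, with $k(r) = \mathcal{O}(r^{2-d/\gamma})$ as $r \to 0$ (where $1 < \gamma < d/2$, so $2 - d/\gamma < 0$), $k'' $ monotone near the origin, and $k'(\delta)$ finite for some $\delta > 0$. Then it cannot hold that $r^{-d/\gamma} = o(k''(r))$ as $r \to 0$; i.e., $k''(r) = \mathcal{O}(r^{-d/\gamma})$ as $r \to 0$. -/
open Filter Set Asymptotics

private lemma bigO_of_bounded_aux {f : ℝ → ℝ} {α : ℝ} (hα : 0 ≤ α) {η M : ℝ} (hη : 0 < η)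
    (hM : 0 ≤ M) (hb : ∀ r ∈ Set.Ioo (0:ℝ) η, |f r| ≤ M) :
    f =O[nhdsWithin 0 (Set.Ioi 0)] fun r : ℝ => r ^ (-α) := by
  rw [Asymptotics.isBigO_iff]
  refine ⟨M, ?_⟩
  have hmem : Set.Ioo (0:ℝ) (min η 1) ∈ nhdsWithin (0:ℝ) (Set.Ioi 0) :=
    Ioo_mem_nhdsGT_of_mem ⟨le_refl 0, lt_min hη one_pos⟩
  filter_upwards [hmem] with r hr
  have hr0 : 0 < r := hr.1
  have hr1 : r ≤ 1 := le_of_lt (lt_of_lt_of_le hr.2 (min_le_right _ _))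
  have h1 : (1:ℝ) ≤ r ^ (-α) :=
    Real.one_le_rpow_of_pos_of_le_one_of_nonpos hr0 hr1 (neg_nonpos.mpr hα)
  have hbr := hb r ⟨hr0, lt_of_lt_of_le hr.2 (min_le_left _ _)⟩
  rw [Real.norm_eq_abs, Real.norm_eq_abs, abs_of_pos (lt_of_lt_of_le one_pos h1)]
  nlinarith [abs_nonneg (f r)]

private lemma abs_step {x y z : ℝ} {r : ℝ} (hr : 0 < r) :
    x - y - r * z ≤ |x| + |y| + r * |z| := by
  have h1 := le_abs_self x
  have h2 := neg_abs_le y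
  have h3 := mul_le_mul_of_nonneg_left (neg_abs_le z) hr.le
  nlinarith

private lemma div_step {A K P r : ℝ} (hA : 0 ≤ A) (hr : 0 < r) (hP : 0 < P)
    (h : A * (2 * r ^ 2) ≤ K * (r ^ 2 * P)) : A ≤ K * P := by
  nlinarith [sq_nonneg r, mul_pos (mul_pos hr hr) hP]

private lemma aux_mono (α : ℝ) (hα : 2 < α) (k : ℝ → ℝ)
    (hk : ContDiffOn ℝ 2 k (Set.Ioi (0:ℝ)))
    (hO : k =O[nhdsWithin 0 (Set.Ioi 0)] fun r : ℝ => r ^ (2 - α))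
    (δ : ℝ) (hδ : 0 < δ) (hm : MonotoneOn (deriv (deriv k)) (Set.Ioo 0 δ)) :
    deriv (deriv k) =O[nhdsWithin 0 (Set.Ioi 0)] fun r : ℝ => r ^ (-α) := by
  have hα0 : (0:ℝ) ≤ α := by linarith
  have hd1 : DifferentiableOn ℝ k (Set.Ioi (0:ℝ)) :=
    hk.differentiableOn (by norm_num)
  have hk1 : ContDiffOn ℝ 1 (deriv k) (Set.Ioi (0:ℝ)) :=
    hk.deriv_of_isOpen isOpen_Ioi (by norm_num)
  have hd2 : DifferentiableOn ℝ (deriv k) (Set.Ioi (0:ℝ)) :=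
    hk1.differentiableOn one_ne_zero
  by_cases hneg : ∃ η ∈ Set.Ioc (0:ℝ) δ, ∀ r ∈ Set.Ioo (0:ℝ) η, deriv (deriv k) r ≤ 0
  · obtain ⟨η, ⟨hη0, hηδ⟩, hN⟩ := hneg
    obtain ⟨c, hc⟩ := Asymptotics.isBigO_iff.mp hO
    obtain ⟨ε, hε, hsub⟩ := mem_nhdsGT_iff_exists_Ioo_subset.mp hc
    have hε0 : (0:ℝ) < ε := hε
    set C : ℝ := max c 0 with hCdef
    have hC0 : 0 ≤ C := le_max_right _ _
    have hbound : ∀ r ∈ Set.Ioo (0:ℝ) ε, |k r| ≤ C * r ^ (2 - α) := by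
      intro r hr
      have hthis := hsub hr
      simp only [Set.mem_setOf_eq, Real.norm_eq_abs] at hthis
      have hpos : 0 < r ^ (2 - α) := Real.rpow_pos_of_pos hr.1 _
      calc |k r| ≤ c * |r ^ (2 - α)| := hthis
        _ ≤ C * |r ^ (2 - α)| :=
            mul_le_mul_of_nonneg_right (le_max_left _ _) (abs_nonneg _)
        _ = C * r ^ (2 - α) := by rw [abs_of_pos hpos]
    set η₀ : ℝ := min η ε with hη₀def
    have hη₀pos : 0 < η₀ := lt_min hη0 hε0
    have hη₀η : η₀ ≤ η := min_le_left _ _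
    have hη₀ε : η₀ ≤ ε := min_le_right _ _
    set b : ℝ := η₀ / 2 with hbdef
    have hb0 : 0 < b := by positivity
    have hbη : b < η := by rw [hbdef]; linarith
    have hbε : b < ε := by rw [hbdef]; linarith
    have hbδ : b < δ := lt_of_lt_of_le hbη hηδ
    have hanti : AntitoneOn (deriv k) (Set.Ioo 0 η) := by
      apply antitoneOn_of_deriv_nonpos (convex_Ioo 0 η)
      · exact (hd2.continuousOn).mono (fun x hx => hx.1)
      · rw [interior_Ioo]; exact hd2.mono (fun x hx => hx.1)
      · rw [interior_Ioo]; exact hN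
    have hmvtk : ∀ a b' : ℝ, 0 < a → a < b' →
        ∃ c' ∈ Set.Ioo a b', deriv k c' = (k b' - k a) / (b' - a) := by
      intro a b' ha hab
      apply exists_deriv_eq_slope k hab
      · exact (hk.continuousOn).mono (fun x hx => lt_of_lt_of_le ha hx.1)
      · exact hd1.mono (fun x hx => lt_trans ha hx.1)
    have hmvtk' : ∀ a b' : ℝ, 0 < a → a < b' →
        ∃ c' ∈ Set.Ioo a b', deriv (deriv k) c' = (deriv k b' - deriv k a) / (b' - a) := by
      intro a b' ha hab
      apply exists_deriv_eq_slope (deriv k) hab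
      · exact (hd2.continuousOn).mono (fun x hx => lt_of_lt_of_le ha hx.1)
      · exact hd2.mono (fun x hx => lt_trans ha hx.1)
    set M : ℝ := (2 * C + |deriv k b|) * (4:ℝ) ^ α with hMdef
    have hM0 : 0 ≤ M := by positivity
    rw [Asymptotics.isBigO_iff]
    refine ⟨M, ?_⟩
    have hmem : Set.Ioo (0:ℝ) (min b 4) ∈ nhdsWithin (0:ℝ) (Set.Ioi 0) :=
      Ioo_mem_nhdsGT_of_mem ⟨le_refl 0, lt_min hb0 (by norm_num)⟩
    filter_upwards [hmem] with s hs
    have hspos : 0 < s := hs.1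
    set r : ℝ := s / 4 with hrdef
    have hr0 : 0 < r := by rw [hrdef]; linarith
    have hs4 : s = 4 * r := by rw [hrdef]; ring
    have hr4b : 4 * r < b := by rw [← hs4]; exact lt_of_lt_of_le hs.2 (min_le_left _ _)
    have hr1 : r ≤ 1 := by
      have h4 : s < 4 := lt_of_lt_of_le hs.2 (min_le_right _ _)
      rw [hrdef]; linarith
    have h4rη : 4 * r ∈ Set.Ioo (0:ℝ) η := ⟨by linarith, by linarith⟩
    have h2rη : 2 * r ∈ Set.Ioo (0:ℝ) η := ⟨by linarith, by linarith⟩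
    have hbη' : b ∈ Set.Ioo (0:ℝ) η := ⟨hb0, hbη⟩
    have h4rδ : 4 * r ∈ Set.Ioo (0:ℝ) δ := ⟨by linarith, by linarith⟩
    -- Step 1: MVT for `deriv k` on `[2r, 4r]`
    obtain ⟨c₁, hc₁, hc₁eq⟩ := hmvtk' (2*r) (4*r) (by linarith) (by linarith)
    have hc₁δ : c₁ ∈ Set.Ioo (0:ℝ) δ := ⟨by linarith [hc₁.1], by linarith [hc₁.2]⟩
    have hne1 : (4*r - 2*r) ≠ 0 := ne_of_gt (by linarith : (0:ℝ) < 4*r - 2*r)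
    have h2 : deriv k (4*r) - deriv k (2*r) = deriv (deriv k) c₁ * (4*r - 2*r) := by
      rw [hc₁eq, div_mul_cancel₀ _ hne1]
    have hmono1 : deriv (deriv k) c₁ ≤ deriv (deriv k) (4*r) :=
      hm hc₁δ h4rδ (le_of_lt hc₁.2)
    have hstep1 : deriv k (4*r) - 2*r * deriv (deriv k) (4*r) ≤ deriv k (2*r) := by
      have h3 := mul_le_mul_of_nonneg_left hmono1 (by linarith : (0:ℝ) ≤ 2*r)
      nlinarith
    -- Step 2: MVT for `k` on `[r, 2r]`
    obtain ⟨c₂, hc₂, hc₂eq⟩ := hmvtk r (2*r) hr0 (by linarith)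
    have hc₂η : c₂ ∈ Set.Ioo (0:ℝ) η := ⟨by linarith [hc₂.1], by linarith [hc₂.2]⟩
    have hne2 : (2*r - r) ≠ 0 := ne_of_gt (by linarith : (0:ℝ) < 2*r - r)
    have hstep2 : k (2*r) - k r = deriv k c₂ * (2*r - r) := by
      rw [hc₂eq, div_mul_cancel₀ _ hne2]
    have hstep2' : deriv k (2*r) ≤ deriv k c₂ := hanti hc₂η h2rη (le_of_lt hc₂.2)
    have hstep3 : deriv k b ≤ deriv k (4*r) := hanti h4rη hbη' (le_of_lt hr4b)
    -- combine
    have hcomb : -(deriv (deriv k) (4*r)) * (2*r^2) ≤ k (2*r) - k r - r * deriv k b := by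
      have h5 := mul_le_mul_of_nonneg_right hstep2' hr0.le
      have h6 := mul_le_mul_of_nonneg_right hstep1 hr0.le
      have h7 := mul_le_mul_of_nonneg_right hstep3 hr0.le
      nlinarith
    -- bound the right-hand side
    have hkr : |k r| ≤ C * r ^ (2 - α) := hbound r ⟨hr0, by linarith⟩
    have hrpow2 : 0 < r ^ (2-α) := Real.rpow_pos_of_pos hr0 _
    have hk2r : |k (2*r)| ≤ C * r ^ (2 - α) := by
      have h1 : |k (2*r)| ≤ C * (2*r) ^ (2 - α) := hbound (2*r) ⟨by linarith, by linarith⟩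
      have h2' : (2*r) ^ (2 - α) = 2 ^ (2-α) * r ^ (2-α) :=
        Real.mul_rpow (by norm_num) (le_of_lt hr0)
      have h3 : (2:ℝ) ^ (2 - α) ≤ 1 :=
        Real.rpow_le_one_of_one_le_of_nonpos (by norm_num) (by linarith)
      have h4 : C * (2 ^ (2-α) * r ^ (2-α)) ≤ C * (1 * r ^ (2-α)) := by
        apply mul_le_mul_of_nonneg_left _ hC0
        exact mul_le_mul_of_nonneg_right h3 hrpow2.le
      rw [h2'] at h1
      calc |k (2*r)| ≤ C * (2 ^ (2-α) * r ^ (2-α)) := h1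
        _ ≤ C * (1 * r ^ (2-α)) := h4
        _ = C * r ^ (2-α) := by ring
    have hnonneg : 0 ≤ -(deriv (deriv k) (4*r)) := by
      have := hN (4*r) h4rη; linarith
    have hr2a : r ≤ r ^ (2 - α) := by
      have h := Real.rpow_le_rpow_of_exponent_ge hr0 hr1 (by linarith : 2 - α ≤ 1)
      rwa [Real.rpow_one] at h
    have hmain : -(deriv (deriv k) (4*r)) * (2*r^2) ≤ (2*C + |deriv k b|) * r ^ (2-α) := by
      have habs1 : k (2*r) - k r - r * deriv k b ≤ |k (2*r)| + |k r| + r * |deriv k b| :=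
        abs_step hr0
      have h8 : r * |deriv k b| ≤ r ^ (2-α) * |deriv k b| :=
        mul_le_mul_of_nonneg_right hr2a (abs_nonneg _)
      calc -(deriv (deriv k) (4*r)) * (2*r^2) ≤ k (2*r) - k r - r * deriv k b := hcomb
        _ ≤ |k (2*r)| + |k r| + r * |deriv k b| := habs1
        _ ≤ C * r ^ (2-α) + C * r ^ (2-α) + r ^ (2-α) * |deriv k b| := by linarith
        _ = (2*C + |deriv k b|) * r ^ (2-α) := by ring
    have hsplit : r ^ (2 - α) = r ^ 2 * r ^ (-α) := by
      rw [show (2:ℝ) - α = 2 + (-α) by ring, Real.rpow_add hr0, Real.rpow_two]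
    have hrpow : 0 < r ^ (-α) := Real.rpow_pos_of_pos hr0 _
    rw [hsplit] at hmain
    have hfinal4r : -(deriv (deriv k) (4*r)) ≤ (2*C + |deriv k b|) * r ^ (-α) := by
      have := div_step hnonneg hr0 hrpow hmain
      linarith [this]
    have hsr : r ^ (-α) = 4 ^ α * s ^ (-α) := by
      rw [hrdef, Real.div_rpow hspos.le (by norm_num : (0:ℝ) ≤ 4),
        Real.rpow_neg (by norm_num : (0:ℝ) ≤ 4), div_eq_mul_inv, inv_inv]
      ring
    have habs : |deriv (deriv k) s| ≤ M * s ^ (-α) := by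
      have h1 : deriv (deriv k) s ≤ 0 := by rw [hs4]; exact hN _ h4rη
      rw [abs_of_nonpos h1]
      have e : -(deriv (deriv k) s) = -(deriv (deriv k) (4*r)) := by rw [hs4]
      rw [e]
      calc -(deriv (deriv k) (4*r)) ≤ (2*C + |deriv k b|) * r ^ (-α) := hfinal4r
        _ = (2*C + |deriv k b|) * (4 ^ α * s ^ (-α)) := by rw [hsr]
        _ = M * s ^ (-α) := by rw [hMdef]; ring
    rw [Real.norm_eq_abs, Real.norm_eq_abs,
      abs_of_pos (Real.rpow_pos_of_pos hspos (-α))]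
    exact habs
  · push_neg at hneg
    have hpos : ∀ s ∈ Set.Ioo (0:ℝ) δ, 0 ≤ deriv (deriv k) s := by
      intro s hsmem
      obtain ⟨r, hrmem, hrpos⟩ := hneg s ⟨hsmem.1, le_of_lt hsmem.2⟩
      exact le_of_lt (lt_of_lt_of_le hrpos (hm ⟨hrmem.1, lt_trans hrmem.2 hsmem.2⟩ hsmem
        (le_of_lt hrmem.2)))
    apply bigO_of_bounded_aux hα0 (half_pos hδ) (abs_nonneg (deriv (deriv k) (δ/2)))
    intro s hsmem
    have hs' : s ∈ Set.Ioo (0:ℝ) δ := ⟨hsmem.1, by linarith [hsmem.2]⟩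
    have h1 : 0 ≤ deriv (deriv k) s := hpos s hs'
    have h2 : deriv (deriv k) s ≤ deriv (deriv k) (δ/2) :=
      hm hs' ⟨half_pos hδ, by linarith⟩ (le_of_lt hsmem.2)
    rw [abs_of_nonneg h1]
    exact le_trans h2 (le_abs_self _)

/-- If `k` is `C²` on `(0,∞)`, `k(r) = O(r^{2-d/γ})` as `r → 0⁺`
(with `1 < γ < d/2`), and `k''` is monotone near the origin, then it cannot hold that
`r^{-d/γ} = o(k''(r))`; i.e. `k''(r) = O(r^{-d/γ})` as `r → 0⁺`. -/
theorem second_deriv_bigO_of_kernel_bigO {d : ℕ} (γ : ℝ) (hγ1 : 1 < γ) (hγ2 : γ < (d:ℝ)/2)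
    (k : ℝ → ℝ) (hk : ContDiffOn ℝ 2 k (Set.Ioi (0:ℝ)))
    (hO : k =O[nhdsWithin 0 (Set.Ioi 0)] fun r : ℝ => r ^ (2 - (d:ℝ)/γ))
    (hmono : ∃ δ > (0:ℝ), MonotoneOn (deriv (deriv k)) (Set.Ioo 0 δ) ∨
      AntitoneOn (deriv (deriv k)) (Set.Ioo 0 δ))
    (δ₀ : ℝ) (hδ₀ : 0 < δ₀) (hdiff : DifferentiableAt ℝ k δ₀) :
    (deriv (deriv k)) =O[nhdsWithin 0 (Set.Ioi 0)] fun r : ℝ => r ^ (-(d:ℝ)/γ) := by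
  obtain ⟨δ, hδ, hcase⟩ := hmono
  have hγ0 : (0:ℝ) < γ := by linarith
  have hα : 2 < (d:ℝ)/γ := by
    rw [lt_div_iff₀ hγ0]; linarith
  have hexp : -(d:ℝ)/γ = -((d:ℝ)/γ) := by ring
  rw [hexp]
  rcases hcase with hm | hm
  · exact aux_mono ((d:ℝ)/γ) hα k hk hO δ hδ hm
  · have e1 : deriv (fun x => -k x) = fun x => -deriv k x := by
      funext x; exact deriv.neg
    have e2 : deriv (deriv (fun x => -k x)) = fun x => -(deriv (deriv k) x) := by
      rw [e1]; funext x; exact deriv.neg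
    have hm' : MonotoneOn (deriv (deriv (fun x => -k x))) (Set.Ioo 0 δ) := by
      rw [e2]; exact fun x hx y hy hxy => neg_le_neg (hm hx hy hxy)
    have h := aux_mono ((d:ℝ)/γ) hα (fun x => -k x) hk.neg hO.neg_left δ hδ hm'
    rw [e2] at h
    have h2 := h.neg_left
    simpa using h2
end

section
/- Let $\hat{C} > 0$, $p \ge 2$, and let $\eta: [0,T] \to [0,\infty)$ be absolutely continuous with $\eta(0) = 0$ and $\eta'(t) \le \hat{C} p \max(\eta(t)^{1-1/p}, \eta(t))$ for a.e. $t$. Then $\eta(t) \le (\hat{C} t)^p$ for all $t \in [0, \min(T, 1/\hat{C})]$. Consequently, if $\eta$ satisfies this bound for every $p \ge 2$ (with the same $\hat{C}$), then $\eta(t) = 0$ for $t \in [0, \min(T, 1/(2\hat{C}))]$. -/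
open Set intervalIntegral

private lemma osgood_step (Chat T p : ℝ) (hChat : 0 < Chat) (hp : 2 ≤ p)
    (η : ℝ → ℝ) (hcont : ContinuousOn η (Set.Icc 0 T)) (h0 : η 0 = 0)
    (hnonneg : ∀ t ∈ Set.Icc 0 T, 0 ≤ η t)
    (hineq : ∀ s t : ℝ, 0 ≤ s → s ≤ t → t ≤ T →
      η t - η s ≤ ∫ τ in s..t, Chat * p * max (η τ ^ (1 - 1/p)) (η τ))
    (ε : ℝ) (hε : 0 < ε) :
    ∀ t : ℝ, 0 ≤ t → t ≤ T → t + ε ≤ 1/Chat → η t < (Chat * (t + ε)) ^ p := by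
  have hp0 : (0:ℝ) < p := by linarith
  have hip : 0 < 1/p := by positivity
  have hip2 : 1/p ≤ 1/2 := by
    apply one_div_le_one_div_of_le <;> linarith
  have he0 : (0:ℝ) < 1 - 1/p := by linarith
  have he1 : 1 - 1/p ≤ 1 := by linarith
  by_contra hcon
  push_neg at hcon
  obtain ⟨w, hw0, hwT, hwε, hwge⟩ := hcon
  set S : Set ℝ := {t : ℝ | 0 ≤ t ∧ t ≤ T ∧ t + ε ≤ 1/Chat ∧ (Chat * (t + ε)) ^ p ≤ η t}
    with hS
  have hSne : S.Nonempty := ⟨w, hw0, hwT, hwε, hwge⟩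
  have hSbdd : BddBelow S := ⟨0, fun x hx => hx.1⟩
  set t0 := sInf S with ht0def
  obtain ⟨u, -, hu_tendsto, hu_mem⟩ := exists_seq_tendsto_sInf hSne hSbdd
  have ht00 : 0 ≤ t0 := le_csInf hSne fun x hx => hx.1
  have ht0T : t0 ≤ T :=
    le_of_tendsto hu_tendsto (Filter.Eventually.of_forall fun n => (hu_mem n).2.1)
  have ht0ε : t0 + ε ≤ 1/Chat := by
    have h1 : Filter.Tendsto (fun n => u n + ε) Filter.atTop (nhds (t0 + ε)) :=
      hu_tendsto.add tendsto_const_nhds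
    exact le_of_tendsto h1 (Filter.Eventually.of_forall fun n => (hu_mem n).2.2.1)
  have hlt : ∀ τ : ℝ, 0 ≤ τ → τ < t0 → η τ < (Chat * (τ + ε)) ^ p := by
    intro τ h0τ hτ
    by_contra hc
    push_neg at hc
    have hmem : τ ∈ S := ⟨h0τ, hτ.le.trans ht0T, by linarith, hc⟩
    exact absurd (csInf_le hSbdd hmem) (not_le.2 hτ)
  have hge : (Chat * (t0 + ε)) ^ p ≤ η t0 := by
    have h1 : Filter.Tendsto (fun n => η (u n)) Filter.atTop (nhds (η t0)) := by
      have hc : ContinuousWithinAt η (Set.Icc 0 T) t0 := hcont t0 ⟨ht00, ht0T⟩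
      apply hc.tendsto.comp
      apply tendsto_nhdsWithin_of_tendsto_nhds_of_eventually_within _ hu_tendsto
      exact Filter.Eventually.of_forall fun n => ⟨(hu_mem n).1, (hu_mem n).2.1⟩
    have h2 : Filter.Tendsto (fun n => (Chat * (u n + ε)) ^ p) Filter.atTop
        (nhds ((Chat * (t0 + ε)) ^ p)) :=
      ((hu_tendsto.add tendsto_const_nhds).const_mul Chat).rpow_const (Or.inr hp0.le)
    exact le_of_tendsto_of_tendsto' h2 h1 fun n => (hu_mem n).2.2.2
  -- the integral comparison
  set f : ℝ → ℝ := fun τ => Chat * p * max (η τ ^ (1 - 1/p)) (η τ) with hf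
  set g : ℝ → ℝ := fun τ => Chat * p * (Chat * (τ + ε)) ^ (p - 1) with hg
  have hIccsub : Set.Icc (0:ℝ) t0 ⊆ Set.Icc 0 T := Set.Icc_subset_Icc le_rfl ht0T
  have hfc : ContinuousOn f (Set.Icc 0 t0) := by
    apply continuousOn_const.mul
    exact ((hcont.mono hIccsub).rpow_const fun x _ => Or.inr he0.le).sup (hcont.mono hIccsub)
  have hgc : ContinuousOn g (Set.Icc 0 t0) := by
    apply continuousOn_const.mul
    have hb : ContinuousOn (fun τ : ℝ => Chat * (τ + ε)) (Set.Icc 0 t0) :=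
      Continuous.continuousOn (by continuity)
    exact hb.rpow_const fun x hx => Or.inl (ne_of_gt (by nlinarith [hx.1]))
  have hfi : IntervalIntegrable f MeasureTheory.volume 0 t0 := by
    apply ContinuousOn.intervalIntegrable
    rwa [Set.uIcc_of_le ht00]
  have hgi : IntervalIntegrable g MeasureTheory.volume 0 t0 := by
    apply ContinuousOn.intervalIntegrable
    rwa [Set.uIcc_of_le ht00]
  have hne : ∀ᵐ τ : ℝ, τ ≠ t0 := by
    rw [MeasureTheory.ae_iff]
    have : {x : ℝ | ¬ x ≠ t0} = {t0} := by ext x; simp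
    rw [this]
    exact MeasureTheory.measure_singleton t0
  have hle : f ≤ᵐ[MeasureTheory.volume.restrict (Set.Icc 0 t0)] g := by
    rw [Filter.EventuallyLE, MeasureTheory.ae_restrict_iff' measurableSet_Icc]
    filter_upwards [hne] with τ hτne hmem
    obtain ⟨hτ0, hτt0⟩ := hmem
    have hτlt : τ < t0 := lt_of_le_of_ne hτt0 hτne
    set B := Chat * (τ + ε) with hB
    have hBpos : 0 < B := mul_pos hChat (by linarith)
    have hB1 : B ≤ 1 := by
      have h1 : Chat * (τ + ε) ≤ Chat * (1/Chat) :=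
        mul_le_mul_of_nonneg_left (by linarith) hChat.le
      rwa [mul_one_div, div_self hChat.ne'] at h1
    have hηφ : η τ ≤ B ^ p := (hlt τ hτ0 hτlt).le
    have hη0 : 0 ≤ η τ := hnonneg τ ⟨hτ0, hτt0.trans ht0T⟩
    have hBp1 : B ^ p ≤ 1 := Real.rpow_le_one hBpos.le hB1 hp0.le
    have hkey : (B ^ p) ^ (1 - 1/p) = B ^ (p - 1) := by
      rw [← Real.rpow_mul hBpos.le]
      congr 1
      field_simp
    show Chat * p * max (η τ ^ (1 - 1/p)) (η τ) ≤ Chat * p * B ^ (p - 1)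
    apply mul_le_mul_of_nonneg_left _ (by positivity)
    apply max_le
    · calc η τ ^ (1 - 1/p) ≤ (B ^ p) ^ (1 - 1/p) := Real.rpow_le_rpow hη0 hηφ he0.le
        _ = B ^ (p - 1) := hkey
    · calc η τ ≤ B ^ p := hηφ
        _ = (B ^ p) ^ (1:ℝ) := (Real.rpow_one _).symm
        _ ≤ (B ^ p) ^ (1 - 1/p) :=
            Real.rpow_le_rpow_of_exponent_ge (Real.rpow_pos_of_pos hBpos p) hBp1 he1
        _ = B ^ (p - 1) := hkey
  have hFTC : (∫ τ in (0:ℝ)..t0, g τ) =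
      (Chat * (t0 + ε)) ^ p - (Chat * (0 + ε)) ^ p := by
    have hderiv : ∀ x ∈ Set.uIcc (0:ℝ) t0,
        HasDerivAt (fun τ : ℝ => (Chat * (τ + ε)) ^ p) (g x) x := by
      intro x hx
      rw [Set.uIcc_of_le ht00] at hx
      have h1 : HasDerivAt (fun τ : ℝ => Chat * (τ + ε)) Chat x := by
        simpa using ((hasDerivAt_id x).add_const ε).const_mul Chat
      have h2 := h1.rpow_const (p := p) (Or.inl (ne_of_gt (by nlinarith [hx.1])))
      simpa [hg] using h2
    exact intervalIntegral.integral_eq_sub_of_hasDerivAt hderiv hgi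
  have hmain := hineq 0 t0 le_rfl ht00 ht0T
  rw [h0, sub_zero] at hmain
  have hmono : (∫ τ in (0:ℝ)..t0, f τ) ≤ ∫ τ in (0:ℝ)..t0, g τ :=
    intervalIntegral.integral_mono_ae_restrict ht00 hfi hgi hle
  have hεpos : 0 < (Chat * (0 + ε)) ^ p := Real.rpow_pos_of_pos (by positivity) p
  have : η t0 ≤ (Chat * (t0 + ε)) ^ p - (Chat * (0 + ε)) ^ p := by
    calc η t0 ≤ ∫ τ in (0:ℝ)..t0, f τ := hmain
      _ ≤ ∫ τ in (0:ℝ)..t0, g τ := hmono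
      _ = (Chat * (t0 + ε)) ^ p - (Chat * (0 + ε)) ^ p := hFTC
  linarith

private lemma osgood_key (Chat T p : ℝ) (hChat : 0 < Chat) (hp : 2 ≤ p)
    (η : ℝ → ℝ) (hcont : ContinuousOn η (Set.Icc 0 T)) (h0 : η 0 = 0)
    (hnonneg : ∀ t ∈ Set.Icc 0 T, 0 ≤ η t)
    (hineq : ∀ s t : ℝ, 0 ≤ s → s ≤ t → t ≤ T →
      η t - η s ≤ ∫ τ in s..t, Chat * p * max (η τ ^ (1 - 1/p)) (η τ)) :
    ∀ t ∈ Set.Icc 0 (min T (1/Chat)), η t ≤ (Chat * t) ^ p := by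
  intro t ht
  obtain ⟨ht0, htm⟩ := ht
  have htT : t ≤ T := htm.trans (min_le_left _ _)
  have htC : t ≤ 1/Chat := htm.trans (min_le_right _ _)
  rcases eq_or_lt_of_le ht0 with h | h
  · rw [← h, h0]
    exact Real.rpow_nonneg (by positivity) p
  · have hlt : ∀ τ ∈ Set.Ico (0:ℝ) t, η τ ≤ (Chat * t) ^ p := by
      rintro τ ⟨hτ0, hτt⟩
      have hstep := osgood_step Chat T p hChat hp η hcont h0 hnonneg hineq (t - τ)
        (by linarith) τ hτ0 (by linarith) (by linarith)
      have he : τ + (t - τ) = t := by ring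
      rw [he] at hstep
      exact hstep.le
    have hne : (nhdsWithin t (Set.Ico 0 t)).NeBot := by
      rw [← mem_closure_iff_nhdsWithin_neBot, closure_Ico (ne_of_lt h)]
      exact ⟨h.le, le_rfl⟩
    have htend : Filter.Tendsto η (nhdsWithin t (Set.Ico 0 t)) (nhds (η t)) := by
      have hc : ContinuousWithinAt η (Set.Icc 0 T) t := hcont t ⟨ht0, htT⟩
      exact hc.tendsto.mono_left
        (nhdsWithin_mono t fun x hx => ⟨hx.1, hx.2.le.trans htT⟩)
    exact le_of_tendsto htend (Filter.eventually_of_mem self_mem_nhdsWithin hlt)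

/-- (Osgood-type uniqueness argument.) If `η ≥ 0` is continuous on `[0,T]`
with `η 0 = 0` and satisfies the (integrated) differential inequality
`η t - η s ≤ ∫_s^t Chat p max (η^{1-1/p}) η` for a fixed `p ≥ 2`, then
`η t ≤ (Chat t)^p` on `[0, min T (1/Chat)]`; and if the inequality holds for every `p ≥ 2`,
then `η ≡ 0` on `[0, min T (1/(2Chat))]`. -/
theorem osgood_uniqueness_bound (Chat T p : ℝ) (hChat : 0 < Chat) (hT : 0 < T) (hp : 2 ≤ p)
    (η : ℝ → ℝ) (hcont : ContinuousOn η (Set.Icc 0 T)) (h0 : η 0 = 0)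
    (hnonneg : ∀ t ∈ Set.Icc 0 T, 0 ≤ η t)
    (hineq : ∀ s t : ℝ, 0 ≤ s → s ≤ t → t ≤ T →
      η t - η s ≤ ∫ τ in s..t, Chat * p * max (η τ ^ (1 - 1/p)) (η τ)) :
    (∀ t ∈ Set.Icc 0 (min T (1/Chat)), η t ≤ (Chat * t) ^ p) ∧
    ((∀ q : ℝ, 2 ≤ q → ∀ s t : ℝ, 0 ≤ s → s ≤ t → t ≤ T →
        η t - η s ≤ ∫ τ in s..t, Chat * q * max (η τ ^ (1 - 1/q)) (η τ)) →
      ∀ t ∈ Set.Icc 0 (min T (1/(2*Chat))), η t = 0) := by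
  constructor
  · exact osgood_key Chat T p hChat hp η hcont h0 hnonneg hineq
  · intro hq t ht
    obtain ⟨ht0, htm⟩ := ht
    have htT : t ≤ T := htm.trans (min_le_left _ _)
    have ht2C : t ≤ 1/(2*Chat) := htm.trans (min_le_right _ _)
    have h2C : (1:ℝ)/(2*Chat) ≤ 1/Chat := by
      apply one_div_le_one_div_of_le hChat
      linarith
    have htmem : t ∈ Set.Icc 0 (min T (1/Chat)) :=
      ⟨ht0, le_min htT (ht2C.trans h2C)⟩
    have hCt : Chat * t ≤ 1/2 := by
      have h1 : Chat * t ≤ Chat * (1/(2*Chat)) :=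
        mul_le_mul_of_nonneg_left ht2C hChat.le
      calc Chat * t ≤ Chat * (1/(2*Chat)) := h1
        _ = 1/2 := by field_simp
    have hb : ∀ n : ℕ, 2 ≤ n → η t ≤ (1/2 : ℝ) ^ (n : ℕ) := by
      intro n hn
      have hq2 : (2:ℝ) ≤ (n : ℝ) := by exact_mod_cast hn
      have h1 := osgood_key Chat T (n : ℝ) hChat hq2 η hcont h0 hnonneg
        (hq (n : ℝ) hq2) t htmem
      have h2 : (Chat * t) ^ ((n : ℕ) : ℝ) ≤ (1/2 : ℝ) ^ ((n : ℕ) : ℝ) :=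
        Real.rpow_le_rpow (by positivity) hCt (by positivity)
      rw [Real.rpow_natCast, Real.rpow_natCast] at h2
      calc η t ≤ (Chat * t) ^ ((n : ℕ) : ℝ) := h1
        _ = (Chat * t) ^ (n : ℕ) := Real.rpow_natCast _ n
        _ ≤ (1/2 : ℝ) ^ (n : ℕ) := h2
    have htends : Filter.Tendsto (fun n : ℕ => ((1:ℝ)/2) ^ n) Filter.atTop (nhds 0) :=
      tendsto_pow_atTop_nhds_zero_of_lt_one (by norm_num) (by norm_num)
    have hle0 : η t ≤ 0 := by
      apply ge_of_tendsto htends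
      filter_upwards [Filter.eventually_ge_atTop 2] with n hn
      exact hb n hn
    exact le_antisymm hle0 (hnonneg t ⟨ht0, htT⟩)
end

section
/- Let $p > 1$, $m^\star > 1$ with $m^\star = (p+1)/p$, $\overline{A} > 0$, $c > 0$, $M > 0$, and $M_c = \left(\frac{2\overline{A}}{(m^\star - 1) C c}\right)^{1/(2-m^\star)}$, where $C > 0$ is a fixed constant. Suppose $h \in L^1 \cap L^{m^\star}(\mathbb{R}^d)$ is nonnegative, nonzero, with finite second moment, and satisfies $\iint h(x)h(y)|x-y|^{-d/p}dxdy \ge \theta C \|h\|_1^{2-m^\star}\|h\|_{m^\star}^{m^\star}$ for some $\theta \in ((M_c/M)^{2-m^\star}, 1)$. Then with $\mu = (\|h\|_1/M)^{1/d}$ and $h_\lambda(x) = \lambda^d h(\lambda \mu x)$, the functional $E(v) = \frac{\overline{A}}{m^\star - 1}\int v^{m^\star}dx - \frac{c}{2}\iint v(x)v(y)|x-y|^{-d/p}dxdy$ satisfies $E(h_\lambda) \to -\infty$ as $\lambda \to \infty$, while $\|h_\lambda\|_1 = M$ for all $\lambda$. -/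
open MeasureTheory Set Filter

instance prodEuclideanHaar (d : ℕ) :
    Measure.IsAddHaarMeasure
      (volume : Measure (EuclideanSpace ℝ (Fin d) × EuclideanSpace ℝ (Fin d))) :=
  @Measure.prod.instIsAddHaarMeasure (EuclideanSpace ℝ (Fin d)) _ _ _
    (EuclideanSpace ℝ (Fin d)) _ _ _ volume volume _ _ _ _ _ _

set_option maxHeartbeats 1000000 in
/-- (Free energy unbounded below at supercritical mass, critical case.)
With `m⋆ = (p+1)/p`, `M_c = (2Ā/((m⋆-1)Cc))^{1/(2-m⋆)}`, a nonnegative `h ∈ L¹ ∩ L^{m⋆}`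
with finite second moment whose interaction integral nearly saturates the HLS constant
(`θ ∈ ((M_c/M)^{2-m⋆}, 1)`), the mass-`M` dilations `h_λ(x) = λ^d h(λμx)` satisfy
`E(h_λ) → -∞` while `‖h_λ‖₁ = M`. -/
theorem critical_free_energy_unbounded {d : ℕ} (hd : 1 ≤ d)
    (p Abar c M C θ : ℝ) (hp : 1 < p) (hAbar : 0 < Abar) (hc : 0 < c) (hM : 0 < M)
    (hC : 0 < C) (mstar : ℝ) (hmstar : mstar = (p+1)/p)
    (Mc : ℝ) (hMc : Mc = (2*Abar / ((mstar - 1) * C * c)) ^ ((1:ℝ)/(2 - mstar)))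
    (h : EuclideanSpace ℝ (Fin d) → ℝ) (hnn : ∀ x, 0 ≤ h x)
    (hL1 : Integrable h volume) (hL1pos : 0 < ∫ x, h x)
    (hLm : MemLp h (ENNReal.ofReal mstar) volume)
    (hmom : Integrable (fun x => ‖x‖^2 * h x) volume)
    (hθlow : (Mc/M) ^ (2 - mstar) < θ) (hθ1 : θ < 1)
    (hint : Integrable (fun z : EuclideanSpace ℝ (Fin d) × EuclideanSpace ℝ (Fin d) =>
      h z.1 * h z.2 * ‖z.1 - z.2‖ ^ (-(d:ℝ)/p)) volume)
    (hlow : θ * C * (∫ x, h x) ^ (2 - mstar) * (∫ x, h x ^ mstar) ≤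
      ∫ z : EuclideanSpace ℝ (Fin d) × EuclideanSpace ℝ (Fin d),
        h z.1 * h z.2 * ‖z.1 - z.2‖ ^ (-(d:ℝ)/p))
    (μ : ℝ) (hμ : μ = ((∫ x, h x) / M) ^ ((1:ℝ)/(d:ℝ)))
    (hlam : ℝ → EuclideanSpace ℝ (Fin d) → ℝ)
    (hhlam : ∀ lam x, hlam lam x = lam ^ (d:ℕ) * h ((lam * μ) • x))
    (En : (EuclideanSpace ℝ (Fin d) → ℝ) → ℝ)
    (hEn : ∀ v, En v = Abar/(mstar - 1) * (∫ x, v x ^ mstar) -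
      c/2 * ∫ z : EuclideanSpace ℝ (Fin d) × EuclideanSpace ℝ (Fin d),
        v z.1 * v z.2 * ‖z.1 - z.2‖ ^ (-(d:ℝ)/p)) :
    Tendsto (fun lam => En (hlam lam)) atTop atBot ∧
    ∀ lam > (0:ℝ), (∫ x, hlam lam x) = M := by
  obtain ⟨I1, hI1⟩ : ∃ r : ℝ, (∫ x, h x) = r := ⟨_, rfl⟩
  obtain ⟨J, hJ⟩ : ∃ r : ℝ, (∫ x, h x ^ mstar) = r := ⟨_, rfl⟩
  obtain ⟨I, hI⟩ : ∃ r : ℝ, (∫ z : EuclideanSpace ℝ (Fin d) × EuclideanSpace ℝ (Fin d),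
      h z.1 * h z.2 * ‖z.1 - z.2‖ ^ (-(d:ℝ)/p)) = r := ⟨_, rfl⟩
  rw [hI1] at hL1pos hμ
  rw [hI1, hJ, hI] at hlow
  have hp0 : (0:ℝ) < p := by linarith
  have hdR : (0:ℝ) < (d:ℝ) := by exact_mod_cast Nat.lt_of_lt_of_le Nat.zero_lt_one hd
  have hd0 : (d:ℝ) ≠ 0 := hdR.ne'
  have hm1 : (0:ℝ) < mstar - 1 := by
    have : mstar - 1 = 1/p := by rw [hmstar]; field_simp; ring
    rw [this]; positivity
  have hm2 : (0:ℝ) < 2 - mstar := by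
    rw [hmstar]
    have : (p+1)/p < 2 := by rw [div_lt_iff₀ hp0]; linarith
    linarith
  have hmpos : (0:ℝ) < mstar := by linarith
  have hμpos : 0 < μ := by rw [hμ]; exact Real.rpow_pos_of_pos (div_pos hL1pos hM) _
  have hμd : μ ^ (d:ℕ) = I1 / M := by
    rw [← Real.rpow_natCast μ d, hμ, ← Real.rpow_mul (div_pos hL1pos hM).le,
      one_div, inv_mul_cancel₀ hd0, Real.rpow_one]
  -- mass preservation
  have mass : ∀ lam > (0:ℝ), (∫ x, hlam lam x) = M := by
    intro lam hl
    have ha : (0:ℝ) < lam * μ := mul_pos hl hμpos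
    simp only [hhlam]
    rw [integral_const_mul,
      Measure.integral_comp_smul_of_nonneg volume h (lam*μ) (hR := ha.le)]
    simp only [smul_eq_mul, finrank_euclideanSpace, Fintype.card_fin]
    rw [hI1, mul_pow, hμd]
    have hl' : lam ^ (d:ℕ) ≠ 0 := by positivity
    field_simp
  -- positivity of J
  have hInt_m : Integrable (fun x => h x ^ mstar) volume := by
    have h1 := hLm.integrable_norm_rpow (ENNReal.ofReal_pos.mpr hmpos).ne' ENNReal.ofReal_ne_top
    have h2 : (fun x => ‖h x‖ ^ (ENNReal.ofReal mstar).toReal) = fun x => h x ^ mstar := by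
      funext x
      rw [ENNReal.toReal_ofReal hmpos.le, Real.norm_eq_abs, abs_of_nonneg (hnn x)]
    rwa [h2] at h1
  have hJpos : 0 < J := by
    rw [← hJ]
    rcases lt_or_eq_of_le (integral_nonneg (f := fun x => h x ^ mstar) fun x => Real.rpow_nonneg (hnn x) mstar) with hJ' | hJ'
    · exact hJ'
    · exfalso
      have hz : (fun x => h x ^ mstar) =ᵐ[volume] 0 := by
        rw [← integral_eq_zero_iff_of_nonneg (fun x => Real.rpow_nonneg (hnn x) mstar) hInt_m]
        exact hJ'.symm
      have hz2 : h =ᵐ[volume] 0 := by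
        filter_upwards [hz] with x hx
        have hx' : h x ^ mstar = 0 := hx
        have := (Real.rpow_eq_zero_iff_of_nonneg (hnn x)).mp hx'
        exact this.1
      have hz3 : I1 = 0 := by
        rw [← hI1, integral_congr_ae hz2]
        simp
      linarith
  -- the constant B
  obtain ⟨B, hB⟩ : ∃ r : ℝ, Abar/(mstar - 1) * ((μ^(d:ℕ))⁻¹ * J)
      - c/2 * (μ ^ ((d:ℝ)/p) * ((μ^(d+d:ℕ))⁻¹ * I)) = r := ⟨_, rfl⟩
  have hμdne : (μ:ℝ) ^ (d:ℕ) ≠ 0 := by positivity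
  -- key rpow identity
  have hμd' : μ ^ ((d:ℝ)) = I1 / M := by rw [Real.rpow_natCast]; exact hμd
  have e1 : μ ^ ((d:ℝ)/p) * (μ^(d+d:ℕ))⁻¹ * (μ^(d:ℕ)) = (I1/M) ^ (mstar-2) := by
    rw [← Real.rpow_natCast μ (d+d), ← Real.rpow_natCast μ d,
      ← Real.rpow_neg hμpos.le, ← Real.rpow_add hμpos, ← Real.rpow_add hμpos]
    rw [show (d:ℝ)/p + -(((d:ℕ)+(d:ℕ):ℕ):ℝ) + ((d:ℕ):ℝ) = (d:ℝ) * (mstar - 2) by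
      push_cast; rw [hmstar]; field_simp; ring]
    rw [Real.rpow_mul hμpos.le, hμd']
  have e2 : (I1/M) ^ (mstar-2) * I1 ^ (2-mstar) = M ^ (2-mstar) := by
    rw [Real.div_rpow hL1pos.le hM.le, div_mul_eq_mul_div, ← Real.rpow_add hL1pos,
      show mstar - 2 + (2 - mstar) = 0 by ring, Real.rpow_zero]
    rw [div_eq_iff (Real.rpow_pos_of_pos hM _).ne', ← Real.rpow_add hM,
      show 2 - mstar + (mstar - 2) = 0 by ring, Real.rpow_zero]
  have key : μ ^ ((d:ℝ)/p) * (μ^(d+d:ℕ))⁻¹ * I1 ^ (2-mstar) = (μ^(d:ℕ))⁻¹ * M ^ (2-mstar) := by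
    have h2' : ((μ:ℝ)^(d+d:ℕ)) ≠ 0 := by positivity
    field_simp
    calc μ ^ ((d:ℝ)/p) * I1 ^ (2-mstar) * μ ^ (d:ℕ)
        = (μ ^ ((d:ℝ)/p) * (μ^(d+d:ℕ))⁻¹ * μ ^ (d:ℕ)) * I1^(2-mstar) * μ^(d+d:ℕ) := by
          field_simp
      _ = (I1/M)^(mstar-2) * I1^(2-mstar) * μ^(d+d:ℕ) := by rw [e1]
      _ = M ^ (2-mstar) * μ ^ (d+d:ℕ) := by rw [e2]
      _ = μ ^ (d+d:ℕ) * M ^ (2-mstar) := by ring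
  -- B < 0
  have hMcpos : 0 < Mc := by
    rw [hMc]
    apply Real.rpow_pos_of_pos
    positivity
  have hMcpow : Mc ^ (2-mstar) = 2*Abar / ((mstar - 1) * C * c) := by
    rw [hMc, ← Real.rpow_mul (by positivity),
      show (1:ℝ)/(2-mstar) * (2-mstar) = 1 by field_simp]
    exact Real.rpow_one _
  have hθM : Mc ^ (2-mstar) < θ * M ^ (2-mstar) := by
    have hMrp : 0 < M ^ (2-mstar) := Real.rpow_pos_of_pos hM _
    have h' := hθlow
    rw [Real.div_rpow hMcpos.le hM.le, div_lt_iff₀ hMrp] at h'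
    linarith
  have hK : Abar/(mstar-1) - c/2 * (θ * C * M ^ (2-mstar)) < 0 := by
    have h1 : Abar/(mstar-1) = C*c/2 * Mc ^ (2-mstar) := by
      rw [hMcpow]; field_simp
    rw [h1]
    have h2' : C*c/2 * Mc ^ (2-mstar) < C*c/2 * (θ * M ^ (2-mstar)) :=
      mul_lt_mul_of_pos_left hθM (by positivity)
    nlinarith
  have hBneg : B < 0 := by
    have hcoef : (0:ℝ) < c/2 * (μ ^ ((d:ℝ)/p) * (μ^(d+d:ℕ))⁻¹) := by positivity
    have step := mul_le_mul_of_nonneg_left hlow hcoef.le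
    have expand : c/2 * (μ ^ ((d:ℝ)/p) * (μ^(d+d:ℕ))⁻¹) * (θ * C * I1 ^ (2-mstar) * J)
        = (μ^(d:ℕ))⁻¹ * J * (c/2 * (θ * C * M ^ (2-mstar))) := by
      calc c/2 * (μ ^ ((d:ℝ)/p) * (μ^(d+d:ℕ))⁻¹) * (θ * C * I1 ^ (2-mstar) * J)
          = c/2 * θ * C * J * (μ ^ ((d:ℝ)/p) * (μ^(d+d:ℕ))⁻¹ * I1 ^ (2-mstar)) := by ring
        _ = c/2 * θ * C * J * ((μ^(d:ℕ))⁻¹ * M ^ (2-mstar)) := by rw [key]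
        _ = (μ^(d:ℕ))⁻¹ * J * (c/2 * (θ * C * M ^ (2-mstar))) := by ring
    have hA2 : (μ^(d:ℕ))⁻¹ * J * (c/2 * (θ * C * M ^ (2-mstar)))
        ≤ c/2 * (μ ^ ((d:ℝ)/p) * ((μ^(d+d:ℕ))⁻¹ * I)) := by
      rw [← expand]
      calc c/2 * (μ ^ ((d:ℝ)/p) * (μ^(d+d:ℕ))⁻¹) * (θ * C * I1 ^ (2-mstar) * J)
          ≤ c/2 * (μ ^ ((d:ℝ)/p) * (μ^(d+d:ℕ))⁻¹) * I := step
        _ = c/2 * (μ ^ ((d:ℝ)/p) * ((μ^(d+d:ℕ))⁻¹ * I)) := by ring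
    have hBle : B ≤ (μ^(d:ℕ))⁻¹ * J * (Abar/(mstar-1) - c/2 * (θ * C * M ^ (2-mstar))) := by
      rw [← hB]
      linarith [hA2]
    have hpos : (0:ℝ) < (μ^(d:ℕ))⁻¹ * J := by positivity
    calc B ≤ (μ^(d:ℕ))⁻¹ * J * (Abar/(mstar-1) - c/2 * (θ * C * M ^ (2-mstar))) := hBle
      _ < 0 := mul_neg_of_pos_of_neg hpos hK
  -- scaling identity for the energy
  have Eeq : ∀ lam : ℝ, 0 < lam → En (hlam lam) = lam ^ ((d:ℝ)/p) * B := by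
    intro lam hl
    have ha : (0:ℝ) < lam * μ := mul_pos hl hμpos
    have hlne : lam ^ (d:ℕ) ≠ 0 := by positivity
    -- first integral
    have int1 : (∫ x, hlam lam x ^ mstar)
        = ((lam:ℝ)^(d:ℕ)) ^ mstar * (((lam*μ)^(d:ℕ))⁻¹ * J) := by
      have e : ∀ x : EuclideanSpace ℝ (Fin d), hlam lam x ^ mstar
          = ((lam:ℝ)^(d:ℕ)) ^ mstar * ((fun y => h y ^ mstar) ((lam*μ) • x)) := by
        intro x
        rw [hhlam]
        exact Real.mul_rpow (by positivity) (hnn _)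
      simp only [e]
      rw [integral_const_mul,
        Measure.integral_comp_smul_of_nonneg volume (fun y => h y ^ mstar) (lam*μ) (hR := ha.le)]
      simp only [smul_eq_mul, finrank_euclideanSpace, Fintype.card_fin]
      rw [hJ]
    -- second integral
    have int2 : (∫ z : EuclideanSpace ℝ (Fin d) × EuclideanSpace ℝ (Fin d),
          hlam lam z.1 * hlam lam z.2 * ‖z.1 - z.2‖ ^ (-(d:ℝ)/p))
        = lam^(d+d:ℕ) * (lam*μ) ^ ((d:ℝ)/p) * (((lam*μ)^(d+d:ℕ))⁻¹ * I) := by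
      have e : ∀ z : EuclideanSpace ℝ (Fin d) × EuclideanSpace ℝ (Fin d),
          hlam lam z.1 * hlam lam z.2 * ‖z.1 - z.2‖ ^ (-(d:ℝ)/p)
          = lam^(d+d:ℕ) * (lam*μ) ^ ((d:ℝ)/p) *
            ((fun w : EuclideanSpace ℝ (Fin d) × EuclideanSpace ℝ (Fin d) =>
              h w.1 * h w.2 * ‖w.1 - w.2‖ ^ (-(d:ℝ)/p)) ((lam*μ) • z)) := by
        intro z
        simp only [hhlam, Prod.smul_fst, Prod.smul_snd]
        have hnorm : ‖(lam*μ) • z.1 - (lam*μ) • z.2‖ ^ (-(d:ℝ)/p)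
            = (lam*μ) ^ (-(d:ℝ)/p) * ‖z.1 - z.2‖ ^ (-(d:ℝ)/p) := by
          rw [← smul_sub, norm_smul, Real.norm_eq_abs, abs_of_pos ha]
          exact Real.mul_rpow ha.le (norm_nonneg _)
        rw [hnorm]
        have hcancel : (lam*μ) ^ ((d:ℝ)/p) * (lam*μ) ^ (-(d:ℝ)/p) = 1 := by
          rw [← Real.rpow_add ha, show (d:ℝ)/p + -(d:ℝ)/p = 0 by ring, Real.rpow_zero]
        have hdd : (lam:ℝ)^(d+d:ℕ) = lam^(d:ℕ) * lam^(d:ℕ) := pow_add lam d d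
        rw [hdd]
        linear_combination (-(1:ℝ)) * (lam ^ (d:ℕ) * lam ^ (d:ℕ) * h ((lam * μ) • z.1) *
          h ((lam * μ) • z.2) * ‖z.1 - z.2‖ ^ (-(d:ℝ)/p)) * hcancel
      simp only [e]
      rw [integral_const_mul,
        Measure.integral_comp_smul_of_nonneg volume
          (fun w : EuclideanSpace ℝ (Fin d) × EuclideanSpace ℝ (Fin d) =>
            h w.1 * h w.2 * ‖w.1 - w.2‖ ^ (-(d:ℝ)/p)) (lam*μ) (hR := ha.le)]
      simp only [smul_eq_mul, Module.finrank_prod, finrank_euclideanSpace, Fintype.card_fin]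
      rw [hI]
    rw [hEn, int1, int2, ← hB]
    -- algebraic identity in lam, μ
    have T1 : ((lam:ℝ)^(d:ℕ)) ^ mstar = lam ^ ((d:ℝ)/p) * lam ^ (d:ℕ) := by
      rw [← Real.rpow_natCast lam d, ← Real.rpow_mul hl.le, ← Real.rpow_add hl]
      congr 1
      rw [hmstar]; field_simp; ring
    have T2 : ((lam*μ):ℝ) ^ ((d:ℝ)/p) = lam ^ ((d:ℝ)/p) * μ ^ ((d:ℝ)/p) :=
      Real.mul_rpow hl.le hμpos.le
    rw [T1, T2, mul_pow lam μ d, mul_pow lam μ (d+d)]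
    have h2' : ((lam:ℝ)^(d+d:ℕ)) ≠ 0 := by positivity
    have h3' : ((μ:ℝ)^(d+d:ℕ)) ≠ 0 := by positivity
    field_simp
  -- conclude
  refine ⟨?_, mass⟩
  have h1 : Tendsto (fun lam : ℝ => lam ^ ((d:ℝ)/p) * B) atTop atBot :=
    Tendsto.atTop_mul_const_of_neg hBneg (tendsto_rpow_atTop (by positivity : (0:ℝ) < (d:ℝ)/p))
  refine h1.congr' ?_
  filter_upwards [eventually_gt_atTop (0:ℝ)] with lam hl
  exact (Eeq lam hl).symm
end

section
/- Let $F \in C^2([0,\infty))$ be convex with $F(0) = 0$ and $F'' > 0$ on $(0,\infty)$. Let $M > 0$ and let $f_n, f: D \to [0, M]$ be measurable functions on a bounded measurable set $D \subset \mathbb{R}^d$ such that $f_n \rightharpoonup f$ weakly in $L^1(D)$ and $\int_D F(f_n)\,dx \to \int_D F(f)\,dx$. Then $\|f_n - f\|_{L^2(D)} \to 0$. -/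
open MeasureTheory Set Filter

lemma aux_meas_comp {α : Type*} [MeasurableSpace α] {g : ℝ → ℝ} {s : Set ℝ}
    (hg : ContinuousOn g s) {f : α → ℝ} (hf : Measurable f) (h : ∀ x, f x ∈ s) :
    Measurable fun x => g (f x) := by
  have : (fun x => g (f x)) = (s.restrict g) ∘ (fun x => (⟨f x, h x⟩ : s)) := rfl
  rw [this]
  exact (hg.restrict.measurable).comp (hf.subtype_mk)

lemma aux_mono_s19 (F : ℝ → ℝ) (hF : ContDiffOn ℝ 2 F (Set.Ici (0:ℝ)))
    (hF'' : ∀ z > (0:ℝ),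
      0 < derivWithin (derivWithin F (Set.Ici (0:ℝ))) (Set.Ici (0:ℝ)) z) : StrictMonoOn (derivWithin F (Set.Ici (0:ℝ))) (Set.Ici (0:ℝ)) := by
  have hud : UniqueDiffOn ℝ (Set.Ici (0:ℝ)) := uniqueDiffOn_Ici 0
  have hF' : ContDiffOn ℝ 1 (derivWithin F (Set.Ici (0:ℝ))) (Set.Ici (0:ℝ)) :=
    hF.derivWithin hud (m := 1) (by norm_num)
  apply strictMonoOn_of_deriv_pos (convex_Ici 0) hF'.continuousOn
  intro z hz
  rw [interior_Ici] at hz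
  have hmem : Set.Ici (0:ℝ) ∈ nhds z := Ici_mem_nhds hz
  rw [← derivWithin_of_mem_nhds hmem]
  exact hF'' z hz

lemma aux_tangent_pos (F : ℝ → ℝ) (hF : ContDiffOn ℝ 2 F (Set.Ici (0:ℝ)))
    (hF'' : ∀ z > (0:ℝ),
      0 < derivWithin (derivWithin F (Set.Ici (0:ℝ))) (Set.Ici (0:ℝ)) z) {a b : ℝ} (ha : a ∈ Set.Ici (0:ℝ)) (hb : b ∈ Set.Ici (0:ℝ))
    (hne : a ≠ b) :
    0 < F a - F b - derivWithin F (Set.Ici (0:ℝ)) b * (a - b) := by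
  have hmono := aux_mono_s19 F hF hF''
  have hFc : ContinuousOn F (Set.Ici (0:ℝ)) := hF.continuousOn
  have hdiff : ∀ z : ℝ, 0 < z → DifferentiableAt ℝ F z := by
    intro z hz
    exact (hF.differentiableOn (by norm_num)).differentiableAt (Ici_mem_nhds hz)
  have hde : ∀ z : ℝ, 0 < z → deriv F z = derivWithin F (Set.Ici (0:ℝ)) z := by
    intro z hz
    exact (derivWithin_of_mem_nhds (Ici_mem_nhds hz)).symm
  rcases lt_or_gt_of_ne hne with hab | hab
  · -- a < b
    obtain ⟨c, hc, hcd⟩ := exists_deriv_eq_slope F hab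
      (hFc.mono (Icc_subset_Ici_iff hab.le |>.mpr ha))
      (fun z hz => (hdiff z (lt_of_le_of_lt ha hz.1)).differentiableWithinAt)
    have hc0 : (0:ℝ) < c := lt_of_le_of_lt ha hc.1
    have : F b - F a = derivWithin F (Set.Ici (0:ℝ)) c * (b - a) := by
      rw [← hde c hc0, hcd]
      rw [div_mul_cancel₀]
      intro h
      apply sub_eq_zero.mp at h
      linarith
    have hlt : derivWithin F (Set.Ici (0:ℝ)) c < derivWithin F (Set.Ici (0:ℝ)) b :=
      hmono (le_of_lt hc0) hb hc.2
    nlinarith [hc.2, hab]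
  · -- b < a
    obtain ⟨c, hc, hcd⟩ := exists_deriv_eq_slope F hab
      (hFc.mono (Icc_subset_Ici_iff hab.le |>.mpr hb))
      (fun z hz => (hdiff z (lt_of_le_of_lt hb hz.1)).differentiableWithinAt)
    have hc0 : (0:ℝ) < c := lt_of_le_of_lt hb hc.1
    have : F a - F b = derivWithin F (Set.Ici (0:ℝ)) c * (a - b) := by
      rw [← hde c hc0, hcd]
      rw [div_mul_cancel₀]
      intro h
      apply sub_eq_zero.mp at h
      linarith
    have hlt : derivWithin F (Set.Ici (0:ℝ)) b < derivWithin F (Set.Ici (0:ℝ)) c :=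
      hmono hb (le_of_lt hc0) hc.1
    nlinarith [hc.1, hab]

lemma aux_nonneg (F : ℝ → ℝ) (hF : ContDiffOn ℝ 2 F (Set.Ici (0:ℝ)))
    (hF'' : ∀ z > (0:ℝ),
      0 < derivWithin (derivWithin F (Set.Ici (0:ℝ))) (Set.Ici (0:ℝ)) z) {a b : ℝ}
    (ha : a ∈ Set.Ici (0:ℝ)) (hb : b ∈ Set.Ici (0:ℝ)) :
    0 ≤ F a - F b - derivWithin F (Set.Ici (0:ℝ)) b * (a - b) := by
  rcases eq_or_ne a b with h | h
  · subst h; ring_nf; exact le_refl 0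
  · exact (aux_tangent_pos F hF hF'' ha hb h).le

lemma aux_bound (F : ℝ → ℝ) (hF : ContDiffOn ℝ 2 F (Set.Ici (0:ℝ)))
    (hF'' : ∀ z > (0:ℝ),
      0 < derivWithin (derivWithin F (Set.Ici (0:ℝ))) (Set.Ici (0:ℝ)) z)
    {M : ℝ} (hM : 0 < M) {ε : ℝ} (hε : 0 < ε) :
    ∃ C > (0:ℝ), ∀ a ∈ Set.Icc (0:ℝ) M, ∀ b ∈ Set.Icc (0:ℝ) M,
      (a - b) ^ 2 ≤ ε + C * (F a - F b - derivWithin F (Set.Ici (0:ℝ)) b * (a - b)) := by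
  set F' := derivWithin F (Set.Ici (0:ℝ)) with hF'def
  have hud : UniqueDiffOn ℝ (Set.Ici (0:ℝ)) := uniqueDiffOn_Ici 0
  have hF'c : ContinuousOn F' (Set.Ici (0:ℝ)) :=
    (hF.derivWithin hud (m := 1) (by norm_num)).continuousOn
  have hFc : ContinuousOn F (Set.Ici (0:ℝ)) := hF.continuousOn
  set g : ℝ × ℝ → ℝ := fun p => F p.1 - F p.2 - F' p.2 * (p.1 - p.2) with hgdef
  have hsub : ∀ a ∈ Set.Icc (0:ℝ) M, a ∈ Set.Ici (0:ℝ) := fun a ha => ha.1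
  have hgnn : ∀ p ∈ (Set.Icc (0:ℝ) M ×ˢ Set.Icc (0:ℝ) M), 0 ≤ g p := fun p hp =>
    aux_nonneg F hF hF'' (hsub _ hp.1) (hsub _ hp.2)
  have hgc : ContinuousOn g (Set.Icc (0:ℝ) M ×ˢ Set.Icc (0:ℝ) M) := by
    apply ContinuousOn.sub
    · apply ContinuousOn.sub
      · exact hFc.comp continuousOn_fst (fun p hp => hsub _ hp.1)
      · exact hFc.comp continuousOn_snd (fun p hp => hsub _ hp.2)
    · exact (hF'c.comp continuousOn_snd (fun p hp => hsub _ hp.2)).mul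
        (continuous_fst.sub continuous_snd).continuousOn
  set K := (Set.Icc (0:ℝ) M ×ˢ Set.Icc (0:ℝ) M) ∩ {p : ℝ × ℝ | ε ≤ (p.1 - p.2) ^ 2} with hK
  have hKc : IsCompact K := (isCompact_Icc.prod isCompact_Icc).inter_right
    (isClosed_le continuous_const (((continuous_fst.sub continuous_snd)).pow 2))
  have hsq : ∀ a ∈ Set.Icc (0:ℝ) M, ∀ b ∈ Set.Icc (0:ℝ) M, (a - b) ^ 2 ≤ M ^ 2 := by
    intro a ha b hb; nlinarith [ha.1, ha.2, hb.1, hb.2]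
  rcases K.eq_empty_or_nonempty with hKe | hKn
  · refine ⟨1, one_pos, fun a ha b hb => ?_⟩
    have : ¬ (ε ≤ (a - b) ^ 2) := by
      intro hcon
      exact absurd (hK ▸ Set.mem_inter (Set.mk_mem_prod ha hb) hcon) (by rw [hKe]; simp)
    have hg0 : 0 ≤ g (a, b) := hgnn (a, b) (Set.mk_mem_prod ha hb)
    simp only [hgdef] at hg0
    push_neg at this
    nlinarith
  · obtain ⟨p₀, hp₀K, hmin⟩ := hKc.exists_isMinOn hKn (hgc.mono (Set.inter_subset_left))
    have hp₀ne : p₀.1 ≠ p₀.2 := by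
      intro h
      have := hp₀K.2
      simp only [Set.mem_setOf_eq, h] at this
      nlinarith
    have hδ : 0 < g p₀ := aux_tangent_pos F hF hF'' (hsub _ hp₀K.1.1) (hsub _ hp₀K.1.2) hp₀ne
    refine ⟨M ^ 2 / g p₀, by positivity, fun a ha b hb => ?_⟩
    have hg0 : 0 ≤ g (a, b) := hgnn (a, b) (Set.mk_mem_prod ha hb)
    by_cases hcase : ε ≤ (a - b) ^ 2
    · have hmem : (a, b) ∈ K := Set.mem_inter (Set.mk_mem_prod ha hb) hcase
      have hge : g p₀ ≤ g (a, b) := hmin hmem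
      have h1 : (a - b) ^ 2 ≤ M ^ 2 := hsq a ha b hb
      have h2 : M ^ 2 ≤ M ^ 2 / g p₀ * g (a, b) := by
        rw [div_mul_eq_mul_div, le_div_iff₀ hδ]
        nlinarith
      simp only [hgdef] at h2 hg0
      nlinarith
    · push_neg at hcase
      simp only [hgdef] at hg0
      nlinarith [mul_nonneg (le_of_lt (show (0:ℝ) < M ^ 2 / g p₀ by positivity)) hg0]

/-- (Bertozzi–Slepčev.) If `F ∈ C²([0,∞))` is convex with `F(0)=0` and
`F'' > 0` on `(0,∞)`, `f_n, f : D → [0,M]` with `f_n ⇀ f` weakly in `L¹(D)` and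
`∫ F(f_n) → ∫ F(f)`, then `f_n → f` strongly in `L²(D)`. -/
theorem strong_L2_from_weak_and_energy {d : ℕ} (F : ℝ → ℝ)
    (hF : ContDiffOn ℝ 2 F (Set.Ici (0:ℝ)))
    (hconv : ConvexOn ℝ (Set.Ici (0:ℝ)) F) (hF0 : F 0 = 0)
    (hF'' : ∀ z > (0:ℝ),
      0 < derivWithin (derivWithin F (Set.Ici (0:ℝ))) (Set.Ici (0:ℝ)) z)
    (D : Set (EuclideanSpace ℝ (Fin d))) (hD : MeasurableSet D)
    (hDb : Bornology.IsBounded D) (M : ℝ) (hM : 0 < M)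
    (f : ℕ → EuclideanSpace ℝ (Fin d) → ℝ) (flim : EuclideanSpace ℝ (Fin d) → ℝ)
    (hfm : ∀ n, Measurable (f n)) (hflm : Measurable flim)
    (hbd : ∀ n, ∀ x ∈ D, f n x ∈ Set.Icc 0 M) (hbd' : ∀ x ∈ D, flim x ∈ Set.Icc 0 M)
    (hweak : ∀ φ : EuclideanSpace ℝ (Fin d) → ℝ, Measurable φ → (∃ B, ∀ x, |φ x| ≤ B) →
      Tendsto (fun n => ∫ x in D, f n x * φ x) atTop (nhds (∫ x in D, flim x * φ x)))
    (henergy : Tendsto (fun n => ∫ x in D, F (f n x)) atTop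
      (nhds (∫ x in D, F (flim x)))) :
    Tendsto (fun n => ∫ x in D, (f n x - flim x) ^ 2) atTop (nhds 0) := by
  classical
  set F' := derivWithin F (Set.Ici (0:ℝ)) with hF'def
  have hud : UniqueDiffOn ℝ (Set.Ici (0:ℝ)) := uniqueDiffOn_Ici 0
  have hF'c : ContinuousOn F' (Set.Ici (0:ℝ)) :=
    (hF.derivWithin hud (m := 1) (by norm_num)).continuousOn
  have hFc : ContinuousOn F (Set.Ici (0:ℝ)) := hF.continuousOn
  -- clamp
  set cl : ℝ → ℝ := fun y => max 0 (min M y) with hcl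
  have hclmem : ∀ y, cl y ∈ Set.Icc (0:ℝ) M :=
    fun y => ⟨le_max_left _ _, max_le hM.le (min_le_left _ _)⟩
  have hclid : ∀ y ∈ Set.Icc (0:ℝ) M, cl y = y := by
    intro y hy
    simp only [hcl, min_eq_right hy.2, max_eq_right hy.1]
  have hclm : Measurable cl := measurable_const.max (measurable_const.min measurable_id)
  have hIccIci : Set.Icc (0:ℝ) M ⊆ Set.Ici 0 := fun y hy => hy.1
  -- the test function φ
  set φ : EuclideanSpace ℝ (Fin d) → ℝ := fun x => F' (cl (flim x)) with hφdef
  have hφm : Measurable φ :=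
    aux_meas_comp (hF'c.mono hIccIci) (hclm.comp hflm) (fun x => hclmem _)
  obtain ⟨Bφ, hBφ⟩ := isCompact_Icc.exists_bound_of_continuousOn (hF'c.mono hIccIci)
  have hφbd : ∀ x, |φ x| ≤ Bφ := fun x => by
    simpa [Real.norm_eq_abs] using hBφ (cl (flim x)) (hclmem _)
  have hφD : ∀ x ∈ D, φ x = F' (flim x) := fun x hx => by
    show F' (cl (flim x)) = F' (flim x)
    rw [hclid _ (hbd' x hx)]
  -- finite measure
  have hDfin : volume D < ⊤ := hDb.measure_lt_top
  haveI : IsFiniteMeasure (volume.restrict D) :=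
    ⟨by rwa [Measure.restrict_apply_univ]⟩
  -- integrability helper
  have hint : ∀ (h : EuclideanSpace ℝ (Fin d) → ℝ),
      AEStronglyMeasurable h (volume.restrict D) → (∃ C, ∀ x ∈ D, |h x| ≤ C) →
      IntegrableOn h D := by
    rintro h hm ⟨C, hC⟩
    refine ⟨hm, HasFiniteIntegral.of_bounded (C := C) ?_⟩
    rw [ae_restrict_iff' hD]
    exact ae_of_all _ fun x hx => by simpa [Real.norm_eq_abs] using hC x hx
  -- bound for F on [0, M]
  obtain ⟨CF, hCF⟩ := isCompact_Icc.exists_bound_of_continuousOn (hFc.mono hIccIci)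
  -- AE strong measurability of F ∘ (f n), F ∘ flim on D
  have hFae : ∀ (g : EuclideanSpace ℝ (Fin d) → ℝ), Measurable g →
      (∀ x ∈ D, g x ∈ Set.Icc (0:ℝ) M) →
      AEStronglyMeasurable (fun x => F (g x)) (volume.restrict D) := by
    intro g hg hgb
    have hm : Measurable fun x => F (cl (g x)) :=
      aux_meas_comp (hFc.mono hIccIci) (hclm.comp hg) (fun x => hclmem _)
    apply hm.aestronglyMeasurable.congr
    filter_upwards [self_mem_ae_restrict hD] with x hx
    show F (cl (g x)) = F (g x)
    rw [hclid _ (hgb x hx)]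
  have hIF : ∀ n, IntegrableOn (fun x => F (f n x)) D := by
    intro n
    exact hint _ (hFae (f n) (hfm n) (hbd n))
      ⟨CF, fun x hx => by simpa [Real.norm_eq_abs] using hCF (f n x) (hbd n x hx)⟩
  have hIFl : IntegrableOn (fun x => F (flim x)) D :=
    hint _ (hFae flim hflm hbd') ⟨CF, fun x hx => by
      simpa [Real.norm_eq_abs] using hCF (flim x) (hbd' x hx)⟩
  have habsM : ∀ (g : EuclideanSpace ℝ (Fin d) → ℝ), (∀ x ∈ D, g x ∈ Set.Icc (0:ℝ) M) →
      ∀ x ∈ D, |g x| ≤ M := by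
    intro g hg x hx
    have := hg x hx
    rw [abs_le]; constructor <;> linarith [this.1, this.2]
  have hBφ0 : 0 ≤ Bφ := le_trans (abs_nonneg _) (hφbd 0)
  have hIφ : ∀ n, IntegrableOn (fun x => f n x * φ x) D := by
    intro n
    refine hint _ ((hfm n).mul hφm).aestronglyMeasurable ⟨M * Bφ, fun x hx => ?_⟩
    rw [abs_mul]
    exact mul_le_mul (habsM (f n) (hbd n) x hx) (hφbd x) (abs_nonneg _) hM.le
  have hIφl : IntegrableOn (fun x => flim x * φ x) D := by
    refine hint _ (hflm.mul hφm).aestronglyMeasurable ⟨M * Bφ, fun x hx => ?_⟩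
    rw [abs_mul]
    exact mul_le_mul (habsM flim hbd' x hx) (hφbd x) (abs_nonneg _) hM.le
  have hIsq : ∀ n, IntegrableOn (fun x => (f n x - flim x) ^ 2) D := by
    intro n
    refine hint _ (((hfm n).sub hflm).pow_const 2).aestronglyMeasurable
      ⟨M ^ 2, fun x hx => ?_⟩
    have h1 := hbd n x hx; have h2 := hbd' x hx
    rw [abs_le]
    constructor <;> nlinarith [h1.1, h1.2, h2.1, h2.2]
  -- the Bregman-type integrand
  set B : ℕ → EuclideanSpace ℝ (Fin d) → ℝ :=
    fun n x => F (f n x) - F (flim x) - (f n x * φ x - flim x * φ x) with hBdef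
  have hIB : ∀ n, IntegrableOn (B n) D :=
    fun n => ((hIF n).sub hIFl).sub ((hIφ n).sub hIφl)
  set J : ℕ → ℝ := fun n =>
    ((∫ x in D, F (f n x)) - ∫ x in D, f n x * φ x) -
      ((∫ x in D, F (flim x)) - ∫ x in D, flim x * φ x) with hJdef
  have hJ : Tendsto J atTop (nhds 0) := by
    have h1 := henergy.sub (hweak φ hφm ⟨Bφ, hφbd⟩)
    simpa using h1.sub_const ((∫ x in D, F (flim x)) - ∫ x in D, flim x * φ x)
  have hJeq : ∀ n, (∫ x in D, B n x) = J n := by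
    intro n
    have e1 : (∫ x in D, B n x) =
        (∫ x in D, (F (f n x) - F (flim x))) -
          ∫ x in D, (f n x * φ x - flim x * φ x) := by
      exact integral_sub ((hIF n).sub hIFl) ((hIφ n).sub hIφl)
    have e2 : (∫ x in D, (F (f n x) - F (flim x))) =
        (∫ x in D, F (f n x)) - ∫ x in D, F (flim x) := by
      exact integral_sub (hIF n) hIFl
    have e3 : (∫ x in D, (f n x * φ x - flim x * φ x)) =
        (∫ x in D, f n x * φ x) - ∫ x in D, flim x * φ x := by
      exact integral_sub (hIφ n) hIφl
    rw [e1, e2, e3, hJdef]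
    ring
  -- conclusion
  rw [NormedAddCommGroup.tendsto_nhds_zero]
  intro ε hε
  set μDr := (volume D).toReal with hμDr
  have hμ0 : 0 ≤ μDr := ENNReal.toReal_nonneg
  have hε₁ : (0:ℝ) < ε / (2 * (μDr + 1)) := by positivity
  obtain ⟨C, hC, hCb⟩ := aux_bound F hF hF'' hM hε₁
  have hJev : ∀ᶠ n in atTop, ‖J n‖ < ε / (2 * C) :=
    (NormedAddCommGroup.tendsto_nhds_zero.mp hJ) (ε / (2 * C)) (by positivity)
  filter_upwards [hJev] with n hn
  have hInn : 0 ≤ ∫ x in D, (f n x - flim x) ^ 2 :=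
    setIntegral_nonneg hD fun x _ => sq_nonneg _
  -- pointwise bound
  have hpt : ∀ x ∈ D, (f n x - flim x) ^ 2 ≤ ε / (2 * (μDr + 1)) + C * B n x := by
    intro x hx
    have heqB : B n x =
        F (f n x) - F (flim x) - F' (flim x) * (f n x - flim x) := by
      rw [hBdef]
      simp only
      rw [hφD x hx]; ring
    rw [heqB]
    exact hCb (f n x) (hbd n x hx) (flim x) (hbd' x hx)
  have hIrhs : IntegrableOn (fun x => ε / (2 * (μDr + 1)) + C * B n x) D :=
    (integrableOn_const hDfin.ne).add ((hIB n).const_mul C)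
  have hkey : (∫ x in D, (f n x - flim x) ^ 2) ≤
      ∫ x in D, (ε / (2 * (μDr + 1)) + C * B n x) :=
    setIntegral_mono_on (hIsq n) hIrhs hD hpt
  have hrhs : (∫ x in D, (ε / (2 * (μDr + 1)) + C * B n x)) =
      ε / (2 * (μDr + 1)) * μDr + C * J n := by
    rw [integral_add (integrableOn_const (C := ε / (2 * (μDr + 1))) hDfin.ne) ((hIB n).const_mul C),
      integral_const_mul, hJeq n, setIntegral_const]
    rw [smul_eq_mul]
    change (volume D).toReal * _ + _ = _
    rw [← hμDr]
    ring
  have h1 : ε / (2 * (μDr + 1)) * μDr ≤ ε / 2 := by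
    rw [div_mul_eq_mul_div, div_le_div_iff₀ (by positivity) (by norm_num)]
    nlinarith
  have h2 : C * J n < ε / 2 := by
    have h3 : |J n| < ε / (2 * C) := by rwa [Real.norm_eq_abs] at hn
    calc C * J n ≤ C * |J n| := by
          have := le_abs_self (J n); nlinarith
      _ < C * (ε / (2 * C)) := mul_lt_mul_of_pos_left h3 hC
      _ = ε / 2 := by field_simp
  rw [Real.norm_eq_abs, abs_of_nonneg hInn]
  calc (∫ x in D, (f n x - flim x) ^ 2) ≤ ε / (2 * (μDr + 1)) * μDr + C * J n := by
        rw [← hrhs]; exact hkey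
    _ < ε := by linarith
end
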